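/- For every real b ≥ 2 and every t ≥ 0: (1+t)^{(b+2)/b} ≥ 1 + ((b+2)/b)·t + ((b+2)/b^2)·t^2 + ((b+2)(2−b)/(3b^3))·t^3. -/

import Mathlib

open Real

/-- Bernoulli for exponents in [-1,0], x ≥ 0. -/
lemma bern_neg (x r : ℝ) (hx : 0 ≤ x) (hr1 : -1 ≤ r) (hr0 : r ≤ 0) :
    1 + r * x ≤ (1 + x) ^ r := by
  have h1x : (0:ℝ) < 1 + x := by linarith
  rcases le_or_gt (1 + r * x) 0 with h | h
  · exact h.trans (rpow_pos_of_pos h1x r).le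
  · have hu0 : 0 ≤ -r := by linarith
    have hu1 : -r ≤ 1 := by linarith
    have hb : (1 + x) ^ (-r) ≤ 1 + (-r) * x :=
      rpow_one_add_le_one_add_mul_self (by linarith : (-1:ℝ) ≤ x) hu0 hu1
    have hpos : (0:ℝ) < (1 + x) ^ (-r) := rpow_pos_of_pos h1x _
    rw [show (1 + x : ℝ) ^ r = ((1 + x) ^ (-r))⁻¹ by rw [← rpow_neg h1x.le, neg_neg],
      inv_eq_one_div, le_div_iff₀ hpos]
    nlinarith [mul_le_mul_of_nonneg_left hb h.le, sq_nonneg (r * x)]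
  
/-- quadratic lower bound for exponent q ∈ [0,1]. -/
lemma quad_bound (q t : ℝ) (hq0 : 0 ≤ q) (hq1 : q ≤ 1) (ht : 0 ≤ t) :
    1 + q * t + q * (q - 1) / 2 * t ^ 2 ≤ (1 + t) ^ q := by
  set g : ℝ → ℝ := fun x => (1 + x) ^ q - (1 + q * x + q * (q - 1) / 2 * x ^ 2) with hg
  have key : ∀ x ∈ Set.Ici (0:ℝ),
      HasDerivAt g (q * ((1 + x) ^ (q - 1) - (1 + (q - 1) * x))) x := by
    intro x hx
    have h1x : (0:ℝ) < 1 + x := by simp at hx; linarith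
    have h1 : HasDerivAt (fun x : ℝ => (1 + x) ^ q) (1 * q * (1 + x) ^ (q - 1)) x :=
      ((hasDerivAt_id x).const_add 1).rpow_const (Or.inl h1x.ne')
    have h2 : HasDerivAt (fun x : ℝ => 1 + q * x + q * (q - 1) / 2 * x ^ 2)
        (q + q * (q - 1) / 2 * (2 * x ^ 1)) x := by
      have := (((hasDerivAt_id x).const_mul q).const_add 1).add
        ((hasDerivAt_pow 2 x).const_mul (q * (q - 1) / 2))
      refine this.congr_deriv ?_
      push_cast; ring
    have := h1.sub h2
    refine this.congr_deriv ?_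
    ring
  have mono : MonotoneOn g (Set.Ici (0:ℝ)) := by
    apply monotoneOn_of_deriv_nonneg (convex_Ici 0)
      (fun x hx => (key x hx).continuousAt.continuousWithinAt)
      (fun x hx => (key x (interior_subset hx)).differentiableAt.differentiableWithinAt)
    · intro x hx
      rw [interior_Ici] at hx
      have hx' : (0:ℝ) ≤ x := le_of_lt hx
      rw [(key x hx').deriv]
      have := bern_neg x (q - 1) hx' (by linarith) (by linarith)
      nlinarith
  have h0 : g 0 ≤ g t := mono (by simp) (by simpa using ht) ht
  have hg0 : g 0 = 0 := by simp [hg]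
  rw [hg0] at h0
  simp only [hg] at h0
  linarith

theorem stmt_8 (b t : ℝ) (hb : 2 ≤ b) (ht : 0 ≤ t) :
    1 + ((b + 2) / b) * t + ((b + 2) / b ^ (2 : ℕ)) * t ^ (2 : ℕ)
      + ((b + 2) * (2 - b) / (3 * b ^ (3 : ℕ))) * t ^ (3 : ℕ)
    ≤ (1 + t) ^ ((b + 2) / b) := by
  have hb0 : (0:ℝ) < b := by linarith
  set p : ℝ := (b + 2) / b with hp
  set q : ℝ := 2 / b with hq
  have hpq : p - 1 = q := by rw [hp, hq]; field_simp; ring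
  have hq0 : 0 ≤ q := by positivity
  have hq1 : q ≤ 1 := by rw [hq, div_le_one hb0]; linarith
  have hp0 : 0 < p := by positivity
  set F : ℝ → ℝ := fun x => (1 + x) ^ p -
    (1 + p * x + ((b + 2) / b ^ (2:ℕ)) * x ^ 2 + ((b + 2) * (2 - b) / (3 * b ^ (3:ℕ))) * x ^ 3)
    with hF
  have key : ∀ x ∈ Set.Ici (0:ℝ),
      HasDerivAt F (p * ((1 + x) ^ q - (1 + q * x + q * (q - 1) / 2 * x ^ 2))) x := by
    intro x hx
    have h1x : (0:ℝ) < 1 + x := by simp at hx; linarith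
    have h1 : HasDerivAt (fun x : ℝ => (1 + x) ^ p) (1 * p * (1 + x) ^ (p - 1)) x :=
      ((hasDerivAt_id x).const_add 1).rpow_const (Or.inl h1x.ne')
    have h2 : HasDerivAt (fun x : ℝ => 1 + p * x + ((b + 2) / b ^ (2:ℕ)) * x ^ 2
        + ((b + 2) * (2 - b) / (3 * b ^ (3:ℕ))) * x ^ 3)
        (p + ((b + 2) / b ^ (2:ℕ)) * (2 * x ^ 1)
          + ((b + 2) * (2 - b) / (3 * b ^ (3:ℕ))) * (3 * x ^ 2)) x := by
      have := ((((hasDerivAt_id x).const_mul p).const_add 1).add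
        ((hasDerivAt_pow 2 x).const_mul ((b + 2) / b ^ (2:ℕ)))).add
        ((hasDerivAt_pow 3 x).const_mul ((b + 2) * (2 - b) / (3 * b ^ (3:ℕ))))
      refine this.congr_deriv ?_
      push_cast; ring
    have := h1.sub h2
    refine this.congr_deriv ?_
    rw [hpq]
    have hb2 : (b:ℝ) ^ (2:ℕ) ≠ 0 := by positivity
    have hb3 : (b:ℝ) ^ (3:ℕ) ≠ 0 := by positivity
    rw [hp, hq]; field_simp
  have mono : MonotoneOn F (Set.Ici (0:ℝ)) := by
    apply monotoneOn_of_deriv_nonneg (convex_Ici 0)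
      (fun x hx => (key x hx).continuousAt.continuousWithinAt)
      (fun x hx => (key x (interior_subset hx)).differentiableAt.differentiableWithinAt)
    · intro x hx
      rw [interior_Ici] at hx
      have hx' : (0:ℝ) ≤ x := le_of_lt hx
      rw [(key x hx').deriv]
      have := quad_bound q x hq0 hq1 hx'
      nlinarith
  have h0 : F 0 ≤ F t := mono (by simp) (by simpa using ht) ht
  have hF0 : F 0 = 0 := by simp [hF]
  rw [hF0] at h0
  simp only [hF] at h0
  linarith
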